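/- Let E be a real normed vector space, (α, 𝒜, μ) a measure space, θ⁰ ∈ E and ε > 0. Let p : E → α → ℝ and g : α → ℝ be such that: (i) g ≥ 0 and p θ x > 0 for all θ in the ball B(θ⁰, ε) and μ-a.e. x; (ii) x ↦ g x · p θ x is μ-integrable for every θ ∈ B(θ⁰, ε); (iii) for μ-a.e. x, the map θ ↦ p θ x has a Fréchet derivative ∂p(θ, x) at every θ ∈ B(θ⁰, ε); (iv) there is a μ-integrable function b with ‖g x · ∂p(θ, x)‖ ≤ b x for all θ ∈ B(θ⁰, ε) and μ-a.e. x; (v) x ↦ g x · ∂p(θ⁰, x) is μ-a.e. strongly measurable. Then the map θ ↦ ∫ g x · p θ x ∂μ is differentiable at θ⁰, and its Fréchet derivative is the continuous linear map v ↦ ∫ g x · p θ⁰ x · (fderiv (θ ↦ log (p θ x)) θ⁰ v) ∂μ. -/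

import Mathlib

open MeasureTheory Metric

/-- Score-function representation of the gradient of the expected fitness:
`∇_θ ∫ g(x) p_θ(x) dμ = ∫ g(x) (∂ log p_θ(x)/∂θ) p_θ(x) dμ` at `θ = θ⁰`. -/
theorem stmt_3 {E : Type*} [NormedAddCommGroup E] [NormedSpace ℝ E]
    {α : Type*} [MeasurableSpace α] (μ : Measure α)
    (θ0 : E) (ε : ℝ) (hε : 0 < ε)
    (p : E → α → ℝ) (g : α → ℝ) (p' : E → α → (E →L[ℝ] ℝ)) (b : α → ℝ)
    (hg0 : ∀ x, 0 ≤ g x)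
    (hppos : ∀ᵐ x ∂μ, ∀ θ ∈ ball θ0 ε, 0 < p θ x)
    (hint : ∀ θ ∈ ball θ0 ε, Integrable (fun x => g x * p θ x) μ)
    (hderiv : ∀ᵐ x ∂μ, ∀ θ ∈ ball θ0 ε, HasFDerivAt (fun θ => p θ x) (p' θ x) θ)
    (hb : Integrable b μ)
    (hbound : ∀ᵐ x ∂μ, ∀ θ ∈ ball θ0 ε, ‖g x • p' θ x‖ ≤ b x)
    (hmeas : AEStronglyMeasurable (fun x => g x • p' θ0 x) μ) :
    ∃ L : E →L[ℝ] ℝ,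
      HasFDerivAt (fun θ => ∫ x, g x * p θ x ∂μ) L θ0 ∧
      ∀ v, L v = ∫ x, g x * p θ0 x * (fderiv ℝ (fun θ => Real.log (p θ x)) θ0 v) ∂μ := by
  have hθ0 : θ0 ∈ ball θ0 ε := mem_ball_self hε
  -- the parametric integral differentiation
  have hF_meas : ∀ᶠ θ in nhds θ0, AEStronglyMeasurable (fun x => g x * p θ x) μ :=
    Filter.eventually_of_mem (ball_mem_nhds θ0 hε) fun θ hθ => (hint θ hθ).aestronglyMeasurable
  have h_diff : ∀ᵐ x ∂μ, ∀ θ ∈ ball θ0 ε,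
      HasFDerivAt (fun θ => g x * p θ x) (g x • p' θ x) θ := by
    filter_upwards [hderiv] with x hx θ hθ
    exact (hx θ hθ).const_mul (g x)
  have key := hasFDerivAt_integral_of_dominated_of_fderiv_le (ball_mem_nhds θ0 hε) hF_meas
    (hint θ0 hθ0) hmeas hbound hb h_diff
  refine ⟨∫ x, g x • p' θ0 x ∂μ, key, fun v => ?_⟩
  have hFint : Integrable (fun x => g x • p' θ0 x) μ := by
    refine hb.mono' hmeas ?_
    filter_upwards [hbound] with x hx using hx θ0 hθ0
  rw [ContinuousLinearMap.integral_apply hFint]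
  refine integral_congr_ae ?_
  filter_upwards [hppos, hderiv] with x hpx hdx
  have hlog : HasFDerivAt (fun θ => Real.log (p θ x)) ((p θ0 x)⁻¹ • p' θ0 x) θ0 :=
    (hdx θ0 hθ0).log (hpx θ0 hθ0).ne'
  rw [hlog.fderiv]
  simp only [ContinuousLinearMap.smul_apply, smul_eq_mul]
  field_simp [(hpx θ0 hθ0).ne']
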